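/- Let $\iota$ be a finite index type. For each $i \in \iota$, let $K_{x_i x_i}, G_x^i \in \mathbb{R}^{n_x \times n_x}$ with each $G_x^i$ invertible, $K_{x_i u}, G_u^i \in \mathbb{R}^{n_x \times n_u}$, $K_{u x_i} \in \mathbb{R}^{n_u \times n_x}$, and let $K_{uu} \in \mathbb{R}^{n_u \times n_u}$; let $\hat r_1^i, \hat r_3^i \in \mathbb{R}^{n_x}$ and $\hat r_2 \in \mathbb{R}^{n_u}$. Set $G_x := \mathrm{blockdiag}_i(G_x^i)$, $G_u := (G_u^i)_i$ (stacked), $K := \begin{bmatrix} \mathrm{blockdiag}_i(K_{x_i x_i}) & (K_{x_i u})_i \\ (K_{u x_i})_i & K_{uu} \end{bmatrix}$, $Z := \begin{bmatrix} -G_x^{-1} G_u \\ I \end{bmatrix}$, and $\hat K_{uu} := Z^\top K Z$. Then vectors $(p_{x_i})_{i}$, $p_u$, $(p_y^i)_i$ satisfy the condensed block-angular system $K_{x_i x_i} p_{x_i} + K_{x_i u} p_u + (G_x^i)^\top p_y^i = -\hat r_1^i$ for all $i$, $\sum_i \big( K_{u x_i} p_{x_i} + (G_u^i)^\top p_y^i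 \big) + K_{uu} p_u = -\hat r_2$, and $G_x^i p_{x_i} + G_u^i p_u = -\hat r_3^i$ for all $i$, if and only if $\hat K_{uu} \, p_u = -\hat r_2 + \sum_i \big[ (G_u^i)^\top (G_x^i)^{-\top} \hat r_1^i + \big( K_{u x_i} - (G_u^i)^\top (G_x^i)^{-\top} K_{x_i x_i} \big) (G_x^i)^{-1} \hat r_3^i \big]$, $p_{x_i} = -(G_x^i)^{-1}(\hat r_3^i + G_u^i p_u)$ for all $i$, and $p_y^i = -(G_x^i)^{-\top}(\hat r_1^i + K_{x_i x_i} p_{x_i} + K_{x_i u} p_u)$ for all $i$. -/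

import Mathlib

open Matrix

section Helpers

variable {ι : Type*} [Fintype ι] [DecidableEq ι] {R : Type*} [CommRing R]

lemma sum_mulVec' {m n : Type*} [Fintype n] (M : ι → Matrix m n R) (v : n → R) :
    (∑ i, M i) *ᵥ v = ∑ i, M i *ᵥ v := by
  ext j
  simp only [Matrix.mulVec, dotProduct, Finset.sum_apply, Matrix.sum_apply,
    Finset.sum_mul]
  rw [Finset.sum_comm]

lemma mulVec_eq_iff {n : Type*} [Fintype n] [DecidableEq n] {A : Matrix n n R}
    (hA : IsUnit A.det) (x b : n → R) : A *ᵥ x = b ↔ x = A⁻¹ *ᵥ b := by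
  constructor
  · rintro rfl
    rw [Matrix.mulVec_mulVec, Matrix.nonsing_inv_mul _ hA, Matrix.one_mulVec]
  · rintro rfl
    rw [Matrix.mulVec_mulVec, Matrix.mul_nonsing_inv _ hA, Matrix.one_mulVec]

lemma stackT_mul_stack {m n p : Type*} [Fintype m]
    (S : ι → Matrix m n R) (T : ι → Matrix m p R) :
    (Matrix.of fun (q : m × ι) j => S q.2 q.1 j)ᵀ *
      (Matrix.of fun (q : m × ι) k => T q.2 q.1 k) = ∑ i, (S i)ᵀ * T i := by
  ext j k
  simp only [Matrix.mul_apply, Matrix.sum_apply, Matrix.transpose_apply, Matrix.of_apply,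
    Fintype.sum_prod_type]
  rw [Finset.sum_comm]

lemma rowstack_mul_stack {m n p : Type*} [Fintype m]
    (U : ι → Matrix n m R) (S : ι → Matrix m p R) :
    (Matrix.of fun a (q : m × ι) => U q.2 a q.1) *
      (Matrix.of fun (q : m × ι) k => S q.2 q.1 k) = ∑ i, U i * S i := by
  ext j k
  simp only [Matrix.mul_apply, Matrix.sum_apply, Matrix.of_apply, Fintype.sum_prod_type]
  rw [Finset.sum_comm]

lemma blockDiag_mul_stack {m n : Type*} [Fintype m]
    (M : ι → Matrix m m R) (N : ι → Matrix m n R) :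
    Matrix.blockDiagonal M * (Matrix.of fun (q : m × ι) j => N q.2 q.1 j) =
      Matrix.of fun (q : m × ι) j => (M q.2 * N q.2) q.1 j := by
  ext q j
  simp only [Matrix.mul_apply, Matrix.blockDiagonal_apply, Matrix.of_apply,
    Fintype.sum_prod_type, ite_mul, zero_mul]
  simp [Finset.sum_ite_eq]

end Helpers

/-- Reduction of the condensed block-angular KKT system: eliminating the
per-scenario state variables via the reduction operator `Z` yields the
reduced dense system `K̂uu pu = rhs`. -/
theorem reduced_block_angular_kkt_system {ι : Type*} [Fintype ι] [DecidableEq ι]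
    {nx nu : ℕ}
    (Kxx : ι → Matrix (Fin nx) (Fin nx) ℝ)
    (Kxu : ι → Matrix (Fin nx) (Fin nu) ℝ)
    (Kux : ι → Matrix (Fin nu) (Fin nx) ℝ)
    (Kuu : Matrix (Fin nu) (Fin nu) ℝ)
    (Gxi : ι → Matrix (Fin nx) (Fin nx) ℝ) (hGxi : ∀ i, IsUnit (Gxi i).det)
    (Gui : ι → Matrix (Fin nx) (Fin nu) ℝ)
    (r1 : ι → Fin nx → ℝ) (r2 : Fin nu → ℝ) (r3 : ι → Fin nx → ℝ)
    (Gx : Matrix (Fin nx × ι) (Fin nx × ι) ℝ) (hGx : Gx = Matrix.blockDiagonal Gxi)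
    (Gu : Matrix (Fin nx × ι) (Fin nu) ℝ)
    (hGu : Gu = Matrix.of fun p j => Gui p.2 p.1 j)
    (K : Matrix ((Fin nx × ι) ⊕ Fin nu) ((Fin nx × ι) ⊕ Fin nu) ℝ)
    (hK : K = Matrix.fromBlocks
      (Matrix.blockDiagonal Kxx)
      (Matrix.of fun p j => Kxu p.2 p.1 j)
      (Matrix.of fun a p => Kux p.2 a p.1)
      Kuu)
    (Z : Matrix ((Fin nx × ι) ⊕ Fin nu) (Fin nu) ℝ)
    (hZ : Z = Matrix.fromRows (-(Gx⁻¹ * Gu)) 1)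
    (Kuu_hat : Matrix (Fin nu) (Fin nu) ℝ)
    (hKuu_hat : Kuu_hat = Zᵀ * K * Z)
    (px : ι → Fin nx → ℝ) (pu : Fin nu → ℝ) (py : ι → Fin nx → ℝ) :
    ((∀ i, Kxx i *ᵥ px i + Kxu i *ᵥ pu + (Gxi i)ᵀ *ᵥ py i = -r1 i) ∧
      (∑ i, (Kux i *ᵥ px i + (Gui i)ᵀ *ᵥ py i)) + Kuu *ᵥ pu = -r2 ∧
      (∀ i, Gxi i *ᵥ px i + Gui i *ᵥ pu = -r3 i)) ↔
    (Kuu_hat *ᵥ pu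
        = -r2 + ∑ i, ((Gui i)ᵀ *ᵥ (((Gxi i)⁻¹)ᵀ *ᵥ r1 i)
            + (Kux i - (Gui i)ᵀ * ((Gxi i)⁻¹)ᵀ * Kxx i) *ᵥ ((Gxi i)⁻¹ *ᵥ r3 i)) ∧
      (∀ i, px i = -((Gxi i)⁻¹ *ᵥ (r3 i + Gui i *ᵥ pu))) ∧
      (∀ i, py i = -(((Gxi i)⁻¹)ᵀ *ᵥ (r1 i + Kxx i *ᵥ px i + Kxu i *ᵥ pu)))) := by
  set S : ι → Matrix (Fin nx) (Fin nu) ℝ := fun i => (Gxi i)⁻¹ * Gui i with hS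
  have hGxinv : Gx⁻¹ = Matrix.blockDiagonal fun i => (Gxi i)⁻¹ := by
    rw [hGx]
    refine Matrix.inv_eq_right_inv ?_
    rw [← Matrix.blockDiagonal_mul]
    have h : (fun i => Gxi i * (Gxi i)⁻¹) = fun _ : ι => (1 : Matrix (Fin nx) (Fin nx) ℝ) := by
      funext i; exact Matrix.mul_nonsing_inv _ (hGxi i)
    rw [h]
    exact Matrix.blockDiagonal_one
  have hstackS : Gx⁻¹ * Gu = Matrix.of fun (q : Fin nx × ι) j => S q.2 q.1 j := by
    rw [hGxinv, hGu, blockDiag_mul_stack]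
  have e1 : (Matrix.of fun (q : Fin nx × ι) j => S q.2 q.1 j)ᵀ *
      (Matrix.blockDiagonal Kxx * (Matrix.of fun (q : Fin nx × ι) j => S q.2 q.1 j))
      = ∑ i, (S i)ᵀ * (Kxx i * S i) := by
    rw [blockDiag_mul_stack]
    exact stackT_mul_stack S (fun i => Kxx i * S i)
  have e2 : (Matrix.of fun (q : Fin nx × ι) j => S q.2 q.1 j)ᵀ *
      (Matrix.of fun (p : Fin nx × ι) j => Kxu p.2 p.1 j) = ∑ i, (S i)ᵀ * Kxu i :=
    stackT_mul_stack S Kxu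
  have e3 : (Matrix.of fun a (p : Fin nx × ι) => Kux p.2 a p.1) *
      (Matrix.of fun (q : Fin nx × ι) j => S q.2 q.1 j) = ∑ i, Kux i * S i :=
    rowstack_mul_stack Kux S
  have hKhat : Kuu_hat =
      Kuu + ∑ i, ((S i)ᵀ * Kxx i * S i - (S i)ᵀ * Kxu i - Kux i * S i) := by
    rw [hKuu_hat, hZ, hK, Matrix.transpose_fromRows, Matrix.fromCols_mul_fromBlocks,
      Matrix.fromCols_mul_fromRows, hstackS]
    simp only [Matrix.transpose_neg, Matrix.transpose_one, Matrix.neg_mul, Matrix.mul_neg,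
      Matrix.one_mul, Matrix.mul_one, neg_neg, Matrix.add_mul, Matrix.mul_assoc]
    rw [e1, e2, e3, Finset.sum_sub_distrib, Finset.sum_sub_distrib]
    abel
  have percl : (∀ i, px i = -((Gxi i)⁻¹ *ᵥ (r3 i + Gui i *ᵥ pu))) →
      (∀ i, py i = -(((Gxi i)⁻¹)ᵀ *ᵥ (r1 i + Kxx i *ᵥ px i + Kxu i *ᵥ pu))) →
      (∑ i, (Kux i *ᵥ px i + (Gui i)ᵀ *ᵥ py i)) + Kuu *ᵥ pu
        = Kuu_hat *ᵥ pu - ∑ i, ((Gui i)ᵀ *ᵥ (((Gxi i)⁻¹)ᵀ *ᵥ r1 i)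
            + (Kux i - (Gui i)ᵀ * ((Gxi i)⁻¹)ᵀ * Kxx i) *ᵥ ((Gxi i)⁻¹ *ᵥ r3 i)) := by
    intro hpx hpy
    have hterm : ∀ i, Kux i *ᵥ px i + (Gui i)ᵀ *ᵥ py i
        = ((S i)ᵀ * Kxx i * S i - (S i)ᵀ * Kxu i - Kux i * S i) *ᵥ pu
          - ((Gui i)ᵀ *ᵥ (((Gxi i)⁻¹)ᵀ *ᵥ r1 i)
            + (Kux i - (Gui i)ᵀ * ((Gxi i)⁻¹)ᵀ * Kxx i) *ᵥ ((Gxi i)⁻¹ *ᵥ r3 i)) := by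
      intro i
      rw [hpy i, hpx i]
      simp only [hS, Matrix.mulVec_add, Matrix.mulVec_neg, Matrix.sub_mulVec,
        Matrix.add_mulVec, Matrix.sub_mul, Matrix.add_mul, Matrix.mulVec_mulVec,
        Matrix.transpose_mul]
      simp only [Matrix.mul_assoc, Matrix.mulVec_add, Matrix.mulVec_neg,
        Matrix.mulVec_mulVec]
      abel
    rw [hKhat, Matrix.add_mulVec, sum_mulVec',
      Finset.sum_congr rfl fun i _ => hterm i, Finset.sum_sub_distrib]
    abel
  constructor
  · rintro ⟨h1, h2, h3⟩
    have hpx : ∀ i, px i = -((Gxi i)⁻¹ *ᵥ (r3 i + Gui i *ᵥ pu)) := by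
      intro i
      have h := (mulVec_eq_iff (hGxi i) (px i) (-r3 i - Gui i *ᵥ pu)).mp
        (by rw [← h3 i]; abel)
      rw [h, show -r3 i - Gui i *ᵥ pu = -(r3 i + Gui i *ᵥ pu) by abel, Matrix.mulVec_neg]
    have hpy : ∀ i, py i = -(((Gxi i)⁻¹)ᵀ *ᵥ (r1 i + Kxx i *ᵥ px i + Kxu i *ᵥ pu)) := by
      intro i
      have hdet : IsUnit (Gxi i)ᵀ.det := by rw [Matrix.det_transpose]; exact hGxi i
      have h := (mulVec_eq_iff hdet (py i)
        (-r1 i - Kxx i *ᵥ px i - Kxu i *ᵥ pu)).mp (by rw [← h1 i]; abel)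
      rw [h, ← Matrix.transpose_nonsing_inv,
        show -r1 i - Kxx i *ᵥ px i - Kxu i *ᵥ pu
          = -(r1 i + Kxx i *ᵥ px i + Kxu i *ᵥ pu) by abel, Matrix.mulVec_neg]
    refine ⟨?_, hpx, hpy⟩
    have key := percl hpx hpy
    rw [key, sub_eq_iff_eq_add] at h2
    exact h2
  · rintro ⟨h2, hpx, hpy⟩
    have h3 : ∀ i, Gxi i *ᵥ px i + Gui i *ᵥ pu = -r3 i := by
      intro i
      rw [hpx i, Matrix.mulVec_neg, Matrix.mulVec_mulVec,
        Matrix.mul_nonsing_inv _ (hGxi i), Matrix.one_mulVec]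
      abel
    have h1 : ∀ i, Kxx i *ᵥ px i + Kxu i *ᵥ pu + (Gxi i)ᵀ *ᵥ py i = -r1 i := by
      intro i
      have hdet : IsUnit (Gxi i)ᵀ.det := by rw [Matrix.det_transpose]; exact hGxi i
      rw [hpy i, Matrix.mulVec_neg, Matrix.mulVec_mulVec, Matrix.transpose_nonsing_inv,
        Matrix.mul_nonsing_inv _ hdet, Matrix.one_mulVec]
      abel
    refine ⟨h1, ?_, h3⟩
    rw [percl hpx hpy, h2]
    abel
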